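/- arXiv:2503.16933 — 2 statements merged into one kernel-verified Lean document; each statement's English description precedes it below -/
import Mathlib

section
/- Let T be a 2-isometry on a complex Hilbert space H and let H₀ := ⋂_{n≥0} Tⁿ(H). Then H₀ is a closed subspace of H that reduces T (i.e. T(H₀) ⊆ H₀ and T*(H₀) ⊆ H₀), and the restriction of T to H₀ is unitary: T maps H₀ isometrically onto H₀. -/
open ContinuousLinearMap

section Aux

variable {H : Type*} [NormedAddCommGroup H] [InnerProductSpace ℂ H] [CompleteSpace H]

/-- Norm growth formula for a 2-isometry. -/
lemma twoIso_growth (T : H →L[ℂ] H)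
    (h2iso : ∀ h : H, ‖T (T h)‖ ^ 2 - 2 * ‖T h‖ ^ 2 + ‖h‖ ^ 2 = 0) :
    ∀ (n : ℕ) (z : H), ‖(T ^ n) z‖ ^ 2 = ‖z‖ ^ 2 + n * (‖T z‖ ^ 2 - ‖z‖ ^ 2) := by
  intro n
  induction n with
  | zero => simp
  | succ n ih =>
    intro z
    have h1 : (T ^ (n + 1)) z = (T ^ n) (T z) := by
      rw [pow_succ, ContinuousLinearMap.mul_apply]
    rw [h1, ih (T z)]
    push_cast
    linear_combination (n : ℝ) * h2iso z

/-- A 2-isometry is expansive. -/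
lemma twoIso_expansive (T : H →L[ℂ] H)
    (h2iso : ∀ h : H, ‖T (T h)‖ ^ 2 - 2 * ‖T h‖ ^ 2 + ‖h‖ ^ 2 = 0) (z : H) :
    ‖z‖ ≤ ‖T z‖ := by
  by_contra hlt
  push_neg at hlt
  have hd : ‖T z‖ ^ 2 - ‖z‖ ^ 2 < 0 := by nlinarith [norm_nonneg z, norm_nonneg (T z)]
  obtain ⟨n, hn⟩ := exists_nat_gt (‖z‖ ^ 2 / (-(‖T z‖ ^ 2 - ‖z‖ ^ 2)))
  have h1 : ‖z‖ ^ 2 < n * (-(‖T z‖ ^ 2 - ‖z‖ ^ 2)) := by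
    rw [div_lt_iff₀ (by linarith)] at hn
    linarith
  have h2 := twoIso_growth T h2iso n z
  nlinarith [sq_nonneg ‖(T ^ n) z‖]

/-- Nonnegative quadratic trick. -/
lemma quad_nonneg_zero {a b : ℝ} (ha : 0 ≤ a) (hb : 0 ≤ b)
    (h : ∀ t : ℝ, 0 ≤ t ^ 2 * a + 2 * t * b) : b = 0 := by
  have ht := h (-b / (a + 1))
  have hA : (0:ℝ) < a + 1 := by linarith
  have h2 : 0 ≤ (a + 1) ^ 2 * ((-b / (a + 1)) ^ 2 * a + 2 * (-b / (a + 1)) * b) :=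
    mul_nonneg (sq_nonneg _) ht
  have h3 : (a + 1) ^ 2 * ((-b / (a + 1)) ^ 2 * a + 2 * (-b / (a + 1)) * b)
      = b ^ 2 * a - 2 * b ^ 2 * (a + 1) := by
    field_simp
    ring
  rw [h3] at h2
  nlinarith [sq_nonneg b]

/-- Real-parameter expansion of the squared norm. -/
lemma norm_add_real_smul_sq (x u : H) (t : ℝ) :
    ‖x + (t : ℂ) • u‖ ^ 2
      = ‖x‖ ^ 2 + 2 * t * RCLike.re (inner ℂ x u : ℂ) + t ^ 2 * ‖u‖ ^ 2 := by
  rw [@norm_add_sq ℂ, inner_smul_right, norm_smul]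
  simp [Complex.norm_real, Real.norm_eq_abs, sq_abs, mul_pow]
  ring

end Aux

/-- For a 2-isometry `T`, the subspace `H₀ = ⋂ₙ Tⁿ(H)` is closed,
reduces `T`, and `T` restricted to `H₀` is unitary (an isometric bijection of `H₀`). -/
theorem twoIsometry_intersection_ranges_reducing_unitary
    {H : Type*} [NormedAddCommGroup H] [InnerProductSpace ℂ H] [CompleteSpace H]
    (T : H →L[ℂ] H)
    (h2iso : ∀ h : H, ‖T (T h)‖ ^ 2 - 2 * ‖T h‖ ^ 2 + ‖h‖ ^ 2 = 0) :
    ∀ H₀ : Submodule ℂ H, H₀ = (⨅ n : ℕ, LinearMap.range ((T ^ n : H →L[ℂ] H) : H →ₗ[ℂ] H)) →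
      IsClosed (H₀ : Set H) ∧
      (∀ x ∈ H₀, T x ∈ H₀) ∧
      (∀ x ∈ H₀, adjoint T x ∈ H₀) ∧
      (∀ x ∈ H₀, ‖T x‖ = ‖x‖) ∧
      H₀.map (T : H →ₗ[ℂ] H) = H₀ := by
  intro H₀ hH₀
  subst hH₀
  have hexp := twoIso_expansive T h2iso
  -- expansivity of powers
  have hexpn : ∀ (n : ℕ) (z : H), ‖z‖ ≤ ‖(T ^ n) z‖ := by
    intro n
    induction n with
    | zero => simp
    | succ n ih =>
      intro z
      have h1 : (T ^ (n + 1)) z = (T ^ n) (T z) := by rw [pow_succ, ContinuousLinearMap.mul_apply]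
      rw [h1]
      exact (hexp z).trans (ih (T z))
  -- injectivity of T
  have hinj : ∀ a b : H, T a = T b → a = b := by
    intro a b hab
    have h1 : ‖a - b‖ ≤ ‖T (a - b)‖ := hexp _
    rw [map_sub, hab, sub_self, norm_zero] at h1
    have h2 : ‖a - b‖ = 0 := le_antisymm h1 (norm_nonneg _)
    rwa [norm_sub_eq_zero_iff] at h2
  have hmem : ∀ x : H, x ∈ (⨅ n : ℕ, LinearMap.range ((T ^ n : H →L[ℂ] H) : H →ₗ[ℂ] H)) ↔
      ∀ n : ℕ, x ∈ LinearMap.range ((T ^ n : H →L[ℂ] H) : H →ₗ[ℂ] H) := fun x => Submodule.mem_iInf _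
  -- closedness
  have hclosed : IsClosed ((⨅ n : ℕ, LinearMap.range ((T ^ n : H →L[ℂ] H) : H →ₗ[ℂ] H) : Submodule ℂ H) : Set H) := by
    rw [Submodule.coe_iInf]
    refine isClosed_iInter fun n => ?_
    have hal : AntilipschitzWith 1 (T ^ n) := by
      refine AntilipschitzWith.of_le_mul_dist fun a b => ?_
      rw [dist_eq_norm, dist_eq_norm, ← map_sub]
      simpa using hexpn n (a - b)
    have h1 : IsClosed (Set.range (T ^ n)) :=
      hal.isClosed_range (T ^ n).uniformContinuous
    rw [LinearMap.coe_range, ContinuousLinearMap.coe_coe]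
    exact h1
  -- T-invariance
  have hTinv : ∀ x ∈ (⨅ n : ℕ, LinearMap.range ((T ^ n : H →L[ℂ] H) : H →ₗ[ℂ] H)),
      T x ∈ (⨅ n : ℕ, LinearMap.range ((T ^ n : H →L[ℂ] H) : H →ₗ[ℂ] H)) := by
    intro x hx
    rw [hmem] at hx ⊢
    intro n
    obtain ⟨y, hy⟩ := hx n
    rw [ContinuousLinearMap.coe_coe] at hy
    refine ⟨T y, ?_⟩
    have h1 : (T ^ n) (T y) = T ((T ^ n) y) := by
      rw [← ContinuousLinearMap.mul_apply, ← pow_succ, pow_succ', ContinuousLinearMap.mul_apply]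
    rw [ContinuousLinearMap.coe_coe, h1, hy]
  -- surjectivity of T on H₀
  have hsurj : ∀ x ∈ (⨅ n : ℕ, LinearMap.range ((T ^ n : H →L[ℂ] H) : H →ₗ[ℂ] H)),
      ∃ y ∈ (⨅ n : ℕ, LinearMap.range ((T ^ n : H →L[ℂ] H) : H →ₗ[ℂ] H)), T y = x := by
    intro x hx
    rw [hmem] at hx
    obtain ⟨y, hy⟩ := hx 1
    rw [pow_one, ContinuousLinearMap.coe_coe] at hy
    refine ⟨y, ?_, hy⟩
    rw [hmem]
    intro n
    obtain ⟨z, hz⟩ := hx (n + 1)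
    rw [ContinuousLinearMap.coe_coe] at hz
    have h1 : T ((T ^ n) z) = x := by
      rw [← ContinuousLinearMap.mul_apply, ← pow_succ', hz]
    exact ⟨z, hinj _ _ (by rw [ContinuousLinearMap.coe_coe, h1, hy])⟩
  -- isometry on H₀
  have hiso : ∀ x ∈ (⨅ n : ℕ, LinearMap.range ((T ^ n : H →L[ℂ] H) : H →ₗ[ℂ] H)), ‖T x‖ = ‖x‖ := by
    intro x hx
    rw [hmem] at hx
    have hd0 : 0 ≤ ‖T x‖ ^ 2 - ‖x‖ ^ 2 := by
      nlinarith [hexp x, norm_nonneg x, norm_nonneg (T x)]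
    have hdle : ∀ n : ℕ, (n : ℝ) * (‖T x‖ ^ 2 - ‖x‖ ^ 2) ≤ ‖x‖ ^ 2 := by
      intro n
      obtain ⟨z, hz⟩ := hx n
      rw [ContinuousLinearMap.coe_coe] at hz
      have g1 := twoIso_growth T h2iso n z
      have g2 := twoIso_growth T h2iso (n + 1) z
      have h1 : (T ^ (n + 1)) z = T ((T ^ n) z) := by rw [pow_succ', ContinuousLinearMap.mul_apply]
      rw [h1, hz] at g2
      rw [hz] at g1
      push_cast at g2
      nlinarith [sq_nonneg ‖z‖]
    have hd : ‖T x‖ ^ 2 - ‖x‖ ^ 2 = 0 := by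
      by_contra hne
      have hpos : 0 < ‖T x‖ ^ 2 - ‖x‖ ^ 2 := lt_of_le_of_ne hd0 (Ne.symm hne)
      obtain ⟨n, hn⟩ := exists_nat_gt (‖x‖ ^ 2 / (‖T x‖ ^ 2 - ‖x‖ ^ 2))
      have h1 : ‖x‖ ^ 2 < n * (‖T x‖ ^ 2 - ‖x‖ ^ 2) := by
        rw [div_lt_iff₀ hpos] at hn
        linarith
      linarith [hdle n]
    nlinarith [norm_nonneg x, norm_nonneg (T x)]
  -- `T*T x = x` on H₀
  have hTT : ∀ x ∈ (⨅ n : ℕ, LinearMap.range ((T ^ n : H →L[ℂ] H) : H →ₗ[ℂ] H)), adjoint T (T x) = x := by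
    intro x hx
    set u : H := adjoint T (T x) - x with hu
    have hux : adjoint T (T x) = u + x := by rw [hu]; abel
    have hinner : ∀ z : H, (inner ℂ (T x) (T z) : ℂ) = inner ℂ u z + inner ℂ x z := by
      intro z
      have h1 := ContinuousLinearMap.adjoint_inner_left T z (T x)
      rw [hux, inner_add_left] at h1
      exact h1.symm
    have hreTu : RCLike.re (inner ℂ (T x) (T u) : ℂ)
        = ‖u‖ ^ 2 + RCLike.re (inner ℂ x u : ℂ) := by
      rw [hinner u, map_add, inner_self_eq_norm_sq]
    have hxiso : ‖T x‖ = ‖x‖ := hiso x hx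
    have key : ∀ t : ℝ, 0 ≤ t ^ 2 * (‖T u‖ ^ 2 - ‖u‖ ^ 2) + 2 * t * ‖u‖ ^ 2 := by
      intro t
      have h1 : ‖x + (t : ℂ) • u‖ ≤ ‖T (x + (t : ℂ) • u)‖ := hexp _
      have h2 : T (x + (t : ℂ) • u) = T x + (t : ℂ) • T u := by
        rw [map_add, map_smul]
      rw [h2] at h1
      have hsq : ‖x + (t : ℂ) • u‖ ^ 2 ≤ ‖T x + (t : ℂ) • T u‖ ^ 2 := by
        nlinarith [norm_nonneg (x + (t : ℂ) • u)]
      rw [norm_add_real_smul_sq x u t, norm_add_real_smul_sq (T x) (T u) t,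
        hreTu, hxiso] at hsq
      nlinarith
    have ha : 0 ≤ ‖T u‖ ^ 2 - ‖u‖ ^ 2 := by
      nlinarith [hexp u, norm_nonneg u, norm_nonneg (T u)]
    have hb : ‖u‖ ^ 2 = 0 := quad_nonneg_zero ha (sq_nonneg _) key
    have hu0 : u = 0 := by
      rw [pow_eq_zero_iff (two_ne_zero), norm_eq_zero] at hb
      exact hb
    rw [hux, hu0, zero_add]
  -- adjoint invariance
  have hadj : ∀ x ∈ (⨅ n : ℕ, LinearMap.range ((T ^ n : H →L[ℂ] H) : H →ₗ[ℂ] H)),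
      adjoint T x ∈ (⨅ n : ℕ, LinearMap.range ((T ^ n : H →L[ℂ] H) : H →ₗ[ℂ] H)) := by
    intro x hx
    obtain ⟨y, hy, hTy⟩ := hsurj x hx
    have : adjoint T x = y := by rw [← hTy, hTT y hy]
    rwa [this]
  refine ⟨hclosed, hTinv, hadj, hiso, ?_⟩
  apply le_antisymm
  · intro x hx
    obtain ⟨y, hy, rfl⟩ := Submodule.mem_map.mp hx
    exact hTinv y hy
  · intro x hx
    obtain ⟨y, hy, hTy⟩ := hsurj x hx
    exact Submodule.mem_map.mpr ⟨y, hy, hTy⟩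
end

section
/- Let (T₁, T₂) be a pair of doubly commuting analytic 2-isometries on a nonzero complex Hilbert space H. Then the joint kernel ker T₁* ∩ ker T₂* is a nontrivial subspace of H, i.e. ker T₁* ∩ ker T₂* ≠ {0}. -/
open ContinuousLinearMap

open scoped InnerProductSpace

/-- A 2-isometry is expansive: `‖h‖ ≤ ‖T h‖`. -/
private lemma twoIso_expansive_s12 {H : Type*} [NormedAddCommGroup H] [InnerProductSpace ℂ H]
    (T : H →L[ℂ] H)
    (h2 : ∀ h : H, ‖T (T h)‖ ^ 2 - 2 * ‖T h‖ ^ 2 + ‖h‖ ^ 2 = 0) (h : H) :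
    ‖h‖ ≤ ‖T h‖ := by
  set g : ℕ → ℝ := fun n => ‖T^[n] h‖ ^ 2 with hg
  have key : ∀ n : ℕ, g (n + 2) + g n = 2 * g (n + 1) := by
    intro n
    have e1 : T^[n + 1] h = T (T^[n] h) := Function.iterate_succ_apply' T n h
    have e2 : T^[n + 2] h = T (T (T^[n] h)) := by
      rw [Function.iterate_succ_apply' T (n + 1) h, e1]
    show ‖T^[n + 2] h‖ ^ 2 + ‖T^[n] h‖ ^ 2 = 2 * ‖T^[n + 1] h‖ ^ 2
    rw [e1, e2]
    linarith [h2 (T^[n] h)]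
  have hstep : ∀ n : ℕ, g (n + 1) - g n = g 1 - g 0 := by
    intro n
    induction n with
    | zero => rfl
    | succ n ih => have := key n; linarith
  have hform : ∀ n : ℕ, g n = g 0 + n * (g 1 - g 0) := by
    intro n
    induction n with
    | zero => simp
    | succ n ih =>
      have := hstep n
      push_cast
      linarith
  have hnonneg : ∀ n : ℕ, 0 ≤ g n := fun n => sq_nonneg _
  have hd : 0 ≤ g 1 - g 0 := by
    by_contra hlt
    push_neg at hlt
    obtain ⟨n, hn⟩ := exists_nat_gt (g 0 / (g 0 - g 1))
    have h01 : 0 < g 0 - g 1 := by linarith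
    rw [div_lt_iff₀ h01] at hn
    have := hform n
    have := hnonneg n
    nlinarith
  have e0 : g 0 = ‖h‖ ^ 2 := by simp [hg]
  have e1 : g 1 = ‖T h‖ ^ 2 := by
    show ‖T^[1] h‖ ^ 2 = ‖T h‖ ^ 2
    simp
  have hsq : ‖h‖ ^ 2 ≤ ‖T h‖ ^ 2 := by rw [← e0, ← e1]; linarith
  nlinarith [norm_nonneg h, norm_nonneg (T h)]

/-- For a doubly commuting pair of analytic 2-isometries on a
nonzero complex Hilbert space, the joint kernel `ker T₁* ∩ ker T₂*` is nontrivial. -/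
theorem doublyCommuting_analytic_twoIsometries_joint_kernel_nontrivial
    {H : Type*} [NormedAddCommGroup H] [InnerProductSpace ℂ H] [CompleteSpace H]
    [Nontrivial H]
    (T₁ T₂ : H →L[ℂ] H)
    (h2iso₁ : ∀ h : H, ‖T₁ (T₁ h)‖ ^ 2 - 2 * ‖T₁ h‖ ^ 2 + ‖h‖ ^ 2 = 0)
    (h2iso₂ : ∀ h : H, ‖T₂ (T₂ h)‖ ^ 2 - 2 * ‖T₂ h‖ ^ 2 + ‖h‖ ^ 2 = 0)
    (hana₁ : (⨅ n : ℕ, LinearMap.range ((T₁ ^ n : H →L[ℂ] H) : H →ₗ[ℂ] H)) = ⊥)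
    (hana₂ : (⨅ n : ℕ, LinearMap.range ((T₂ ^ n : H →L[ℂ] H) : H →ₗ[ℂ] H)) = ⊥)
    (hcomm : T₁ ∘L T₂ = T₂ ∘L T₁)
    (hdcomm : T₁ ∘L adjoint T₂ = adjoint T₂ ∘L T₁) :
    LinearMap.ker (adjoint T₁ : H →ₗ[ℂ] H) ⊓ LinearMap.ker (adjoint T₂ : H →ₗ[ℂ] H) ≠ ⊥ := by
  have hexp₁ : ∀ h : H, ‖h‖ ≤ ‖T₁ h‖ := twoIso_expansive_s12 T₁ h2iso₁
  have hexp₂ : ∀ h : H, ‖h‖ ≤ ‖T₂ h‖ := twoIso_expansive_s12 T₂ h2iso₂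
  have hanti₁ : AntilipschitzWith 1 ⇑T₁ :=
    T₁.antilipschitz_of_bound (by simpa using hexp₁)
  have hanti₂ : AntilipschitzWith 1 ⇑T₂ :=
    T₂.antilipschitz_of_bound (by simpa using hexp₂)
  -- the kernel of the adjoint is the orthogonal complement of the range
  have hker_orth : ∀ T : H →L[ℂ] H, LinearMap.ker (adjoint T : H →ₗ[ℂ] H) = (LinearMap.range (T : H →ₗ[ℂ] H))ᗮ := by
    intro T
    ext x
    simp only [LinearMap.mem_ker, Submodule.mem_orthogonal, ContinuousLinearMap.coe_coe]
    constructor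
    · rintro hx u ⟨y, rfl⟩
      rw [ContinuousLinearMap.coe_coe, ← adjoint_inner_right T y x, hx, inner_zero_right]
    · intro hx
      have h0 : (inner ℂ (adjoint T x) (adjoint T x) : ℂ) = 0 := by
        rw [adjoint_inner_right T (adjoint T x) x]
        exact hx _ ⟨adjoint T x, rfl⟩
      exact inner_self_eq_zero.mp h0
  set E : Submodule ℂ H := LinearMap.ker (adjoint T₂ : H →ₗ[ℂ] H) with hE
  have hEclosed : IsClosed (E : Set H) := ContinuousLinearMap.isClosed_ker (adjoint T₂)
  -- E is nontrivial
  have hE_ne : E ≠ ⊥ := by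
    intro hbot
    have hrcl : IsClosed (LinearMap.range (T₂ : H →ₗ[ℂ] H) : Set H) := by
      have h1 := hanti₂.isClosed_range T₂.uniformContinuous
      have h2 : (LinearMap.range (T₂ : H →ₗ[ℂ] H) : Set H) = Set.range ⇑T₂ := by
        ext z; simp [LinearMap.mem_range, Set.mem_range]
      rwa [h2]
    haveI : CompleteSpace (LinearMap.range (T₂ : H →ₗ[ℂ] H)) := hrcl.completeSpace_coe
    have horth : (LinearMap.range (T₂ : H →ₗ[ℂ] H))ᗮ = ⊥ := by rw [← hker_orth T₂, ← hE, hbot]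
    have htop : LinearMap.range (T₂ : H →ₗ[ℂ] H) = ⊤ := Submodule.orthogonal_eq_bot_iff.mp horth
    have hsurj : Function.Surjective ⇑T₂ := LinearMap.range_eq_top.mp htop
    have hall : ∀ n : ℕ, LinearMap.range ((T₂ ^ n : H →L[ℂ] H) : H →ₗ[ℂ] H) = ⊤ := by
      intro n
      rw [LinearMap.range_eq_top]
      induction n with
      | zero => intro z; exact ⟨z, rfl⟩
      | succ n ih =>
        intro z
        obtain ⟨w, hw⟩ := hsurj z
        obtain ⟨v, hv⟩ := ih w
        exact ⟨v, by rw [ContinuousLinearMap.coe_coe] at hv ⊢; rw [pow_succ', ContinuousLinearMap.mul_apply, hv, hw]⟩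
    obtain ⟨x, hx⟩ := exists_ne (0 : H)
    have hxmem : x ∈ (⨅ n : ℕ, LinearMap.range ((T₂ ^ n : H →L[ℂ] H) : H →ₗ[ℂ] H)) := by
      rw [Submodule.mem_iInf]
      intro n
      rw [hall n]
      trivial
    rw [hana₂] at hxmem
    exact hx (Submodule.mem_bot ℂ |>.mp hxmem)
  -- F = T₁(E) is contained in E
  set F : Submodule ℂ H := Submodule.map (T₁ : H →ₗ[ℂ] H) E with hF
  have hFE : F ≤ E := by
    rintro _ ⟨x, hx, rfl⟩
    show adjoint T₂ (T₁ x) = 0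
    have h := ContinuousLinearMap.ext_iff.mp hdcomm x
    simp only [ContinuousLinearMap.comp_apply] at h
    rw [← h]
    have hx' : adjoint T₂ x = 0 := hx
    rw [hx', map_zero]
  -- F is closed
  have hFclosed : IsClosed (F : Set H) := by
    have hclemb := hanti₁.isClosedEmbedding T₁.uniformContinuous
    have : (F : Set H) = ⇑T₁ '' (E : Set H) := rfl
    rw [this]
    exact hclemb.isClosedMap _ hEclosed
  -- F is a proper subspace of E
  have hFne : F ≠ E := by
    intro hFE'
    have hle : ∀ n : ℕ, E ≤ LinearMap.range ((T₁ ^ n : H →L[ℂ] H) : H →ₗ[ℂ] H) := by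
      intro n
      induction n with
      | zero => intro x _; exact ⟨x, rfl⟩
      | succ n ih =>
        intro x hx
        rw [← hFE'] at hx
        obtain ⟨y, hy, rfl⟩ := hx
        obtain ⟨z, hz⟩ := ih hy
        exact ⟨z, by rw [ContinuousLinearMap.coe_coe] at hz ⊢; rw [pow_succ', ContinuousLinearMap.mul_apply, hz]; rfl⟩
    have : E ≤ ⊥ := hana₁ ▸ le_iInf hle
    exact hE_ne (le_bot_iff.mp this)
  haveI : CompleteSpace F := hFclosed.completeSpace_coe
  obtain ⟨x, hxE, hxF⟩ := SetLike.exists_of_lt (lt_of_le_of_ne hFE hFne)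
  set e : H := x - (F.orthogonalProjectionOnto x : H) with he
  have he_orth : e ∈ Fᗮ := Submodule.sub_starProjection_mem_orthogonal (K := F) x
  have heE : e ∈ E := E.sub_mem hxE (hFE (F.orthogonalProjectionOnto x).2)
  have he_ne : e ≠ 0 := by
    intro h0
    apply hxF
    have hx' : x = (F.orthogonalProjectionOnto x : H) := by rwa [sub_eq_zero] at h0
    rw [hx']
    exact (F.orthogonalProjectionOnto x).2
  -- e is in the kernel of the adjoint of T₁
  have hT1e : adjoint T₁ e = 0 := by
    set y : H := adjoint T₁ e with hy
    have hyE : y ∈ E := by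
      show adjoint T₂ y = 0
      have hadj : adjoint T₂ ∘L adjoint T₁ = adjoint T₁ ∘L adjoint T₂ := by
        have h := congrArg adjoint hcomm
        rwa [adjoint_comp, adjoint_comp] at h
      have h := ContinuousLinearMap.ext_iff.mp hadj e
      simp only [ContinuousLinearMap.comp_apply] at h
      have he2 : adjoint T₂ e = 0 := heE
      rw [hy, h, he2, map_zero]
    have h1 : (inner ℂ y y : ℂ) = inner ℂ (T₁ y) e := adjoint_inner_right T₁ y e
    have h2 : (inner ℂ (T₁ y) e : ℂ) = 0 :=
      (Submodule.mem_orthogonal F e).mp he_orth (T₁ y) ⟨y, hyE, rfl⟩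
    exact inner_self_eq_zero.mp (h1.trans h2)
  intro hbot
  have hmem : e ∈ LinearMap.ker (adjoint T₁ : H →ₗ[ℂ] H) ⊓ LinearMap.ker (adjoint T₂ : H →ₗ[ℂ] H) :=
    Submodule.mem_inf.mpr ⟨LinearMap.mem_ker.mpr hT1e, heE⟩
  rw [hbot] at hmem
  exact he_ne (Submodule.mem_bot ℂ |>.mp hmem)
end
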